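/- Let R₋, R₊ be sets and R ⊆ R₋ × R₊ a relation, and suppose there is a set A = {a_α : α < κ} ⊆ R₋ of size κ such that no single b ∈ R₊ satisfies a_α R b for all α < κ. Let λ be a cardinal with λ^κ = λ. Then there is a family F ⊆ ^λR₋ of size 2^λ such that for every subfamily A' ⊆ F of size κ, there is no g ∈ ^λR₊ with (∀f ∈ A')(∀x ∈ λ) f(x) R g(x). In particular the 'dominating number' of the λ-fold conjunction relation is 2^λ (when |^λR₊| ≤ 2^λ). -/

import Mathlib

open Cardinal Order

/-- The cofinality of the everywhere (pointwise) domination order on functions `X → K`. -/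
noncomputable def everyCof (X K : Type*) [LE K] : Cardinal :=
  sInf {c | ∃ D : Set (X → K), #D = c ∧ ∀ f : X → K, ∃ g ∈ D, ∀ x, f x ≤ g x}

/-- The cofinality of the eventual domination order on functions `X → K`. -/
noncomputable def evenCof (X K : Type*) [LE X] [LE K] : Cardinal :=
  sInf {c | ∃ D : Set (X → K), #D = c ∧
    ∀ f : X → K, ∃ g ∈ D, ∃ a : X, ∀ b : X, a ≤ b → f b ≤ g b}

section EK

open scoped Classical

variable {K : Type u} {Λ : Type u} {Rm : Type v}

/-- consistency of a set with one "condition" (positive part, negative part). -/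
def EKcons (A : Set Λ) (p : (K → Option Λ) × (K → Option Λ)) : Prop :=
  (∀ β w, p.1 β = some w → w ∈ A) ∧ (∀ β w, p.2 β = some w → w ∉ A)

noncomputable def EKfun [Nonempty K] (a : K → Rm) (A : Set Λ)
    (s : K → (K → Option Λ) × (K → Option Λ)) : Rm :=
  if h : ∃! α, EKcons A (s α) then a h.choose else a (Classical.arbitrary K)

lemma EKfun_eq [Nonempty K] (a : K → Rm) (A : Set Λ)
    (s : K → (K → Option Λ) × (K → Option Λ)) (γ : K)
    (h1 : EKcons A (s γ)) (h2 : ∀ β, EKcons A (s β) → β = γ) :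
    EKfun a A s = a γ := by
  have h : ∃! α, EKcons A (s α) := ⟨γ, h1, h2⟩
  rw [EKfun, dif_pos h]
  exact congrArg a (h2 _ h.choose_spec.1)

lemma EKkey [Nonempty K] (a : K → Rm) (B : K → Set Λ) (hB : Function.Injective B) :
    ∃ s : K → (K → Option Λ) × (K → Option Λ), ∀ γ, EKfun a (B γ) s = a γ := by
  have hz : ∀ α β : K, α ≠ β → ∃ w, ¬ (w ∈ B α ↔ w ∈ B β) := by
    intro α β h
    by_contra hc
    push_neg at hc
    exact h (hB (Set.ext fun w => (hc w)))
  choose z hzs using hz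
  set s : K → (K → Option Λ) × (K → Option Λ) := fun α =>
    (fun β => if h : α ≠ β then
      (if z α β h ∈ B α then some (z α β h) else none) else none,
     fun β => if h : α ≠ β then
      (if z α β h ∈ B α then none else some (z α β h)) else none) with hs
  refine ⟨s, ?_⟩
  intro γ
  have hcons : ∀ α, EKcons (B α) (s α) := by
    intro α
    constructor
    · intro β w hw
      rw [hs] at hw
      simp only at hw
      by_cases h1 : α ≠ β
      · rw [dif_pos h1] at hw
        by_cases h2 : z α β h1 ∈ B α
        · rw [if_pos h2] at hw; cases hw; exact h2
        · rw [if_neg h2] at hw; cases hw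
      · rw [dif_neg h1] at hw; cases hw
    · intro β w hw
      rw [hs] at hw
      simp only at hw
      by_cases h1 : α ≠ β
      · rw [dif_pos h1] at hw
        by_cases h2 : z α β h1 ∈ B α
        · rw [if_pos h2] at hw; cases hw
        · rw [if_neg h2] at hw; cases hw; exact h2
      · rw [dif_neg h1] at hw; cases hw
  have hncons : ∀ α, α ≠ γ → ¬ EKcons (B γ) (s α) := by
    intro α hαγ hc
    by_cases hzmem : z α γ hαγ ∈ B α
    · have hmem : z α γ hαγ ∈ B γ := by
        apply hc.1 γ
        rw [hs]
        simp only
        rw [dif_pos hαγ, if_pos hzmem]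
      exact hzs α γ hαγ ⟨fun _ => hmem, fun _ => hzmem⟩
    · have hmem : z α γ hαγ ∉ B γ := by
        apply hc.2 γ
        rw [hs]
        simp only
        rw [dif_pos hαγ, if_neg hzmem]
      exact hzs α γ hαγ ⟨fun h => absurd h hzmem, fun h => absurd h hmem⟩
  exact EKfun_eq a (B γ) s γ (hcons γ) (fun β hβ => by
    by_contra hne
    exact hncons β hne hβ)

lemma EKinj [Nonempty K] (a : K → Rm) (ha : Function.Injective a)
    (α₀ α₁ : K) (hne : α₀ ≠ α₁) :
    Function.Injective (fun A : Set Λ => EKfun a A) := by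
  have key : ∀ (A A' : Set Λ) (w : Λ), w ∈ A → w ∉ A' →
      EKfun a A ≠ EKfun a A' := by
    intro A A' w hwA hwA'
    set s : K → (K → Option Λ) × (K → Option Λ) := fun α =>
      if α = α₀ then ((fun _ => some w), (fun _ => none))
      else if α = α₁ then ((fun _ => none), (fun _ => some w))
      else ((fun _ => some w), (fun _ => some w)) with hs
    have hs0 : s α₀ = ((fun _ => some w), (fun _ => none)) := by
      rw [hs]; simp
    have hs1 : s α₁ = ((fun _ => none), (fun _ => some w)) := by
      rw [hs]; simp [hne.symm]
    have hsother : ∀ β, β ≠ α₀ → β ≠ α₁ →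
        s β = ((fun _ => some w), (fun _ => some w)) := by
      intro β h0 h1
      rw [hs]; simp only [if_neg h0, if_neg h1]
    intro hEq
    have e0 : EKfun a A s = a α₀ := by
      apply EKfun_eq a A s α₀
      · constructor
        · intro β v hv
          rw [hs0] at hv
          cases hv; exact hwA
        · intro β v hv
          rw [hs0] at hv
          cases hv
      · intro β hβ
        by_contra hβne
        by_cases hβ1 : β = α₁
        · rw [hβ1, hs1] at hβ
          exact hβ.2 α₀ w rfl hwA
        · rw [hsother β hβne hβ1] at hβ
          exact hβ.2 α₀ w rfl (hβ.1 α₀ w rfl)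
    have e1 : EKfun a A' s = a α₁ := by
      apply EKfun_eq a A' s α₁
      · constructor
        · intro β v hv
          rw [hs1] at hv
          cases hv
        · intro β v hv
          rw [hs1] at hv
          cases hv; exact hwA'
      · intro β hβ
        by_contra hβne
        by_cases hβ0 : β = α₀
        · rw [hβ0, hs0] at hβ
          exact hwA' (hβ.1 α₀ w rfl)
        · rw [hsother β hβ0 hβne] at hβ
          exact hβ.2 α₀ w rfl (hβ.1 α₀ w rfl)
    have : a α₀ = a α₁ := by rw [← e0, ← e1, hEq]
    exact hne (ha this)
  intro A A' hAA'
  by_contra hne'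
  have hex : ∃ w, ¬ (w ∈ A ↔ w ∈ A') := by
    by_contra hc
    push_neg at hc
    exact hne' (Set.ext fun w => hc w)
  obtain ⟨w, hw⟩ := hex
  by_cases hwA : w ∈ A
  · have hwA' : w ∉ A' := fun h => hw ⟨fun _ => h, fun _ => hwA⟩
    exact key A A' w hwA hwA' hAA'
  · have hwA' : w ∈ A' := by
      by_contra h
      exact hw ⟨fun h' => absurd h' hwA, fun h' => absurd h' h⟩
    exact key A' A w hwA' hwA hAA'.symm
  
end EK

theorem stmt_19 (Rm Rp : Type) (R : Rm → Rp → Prop) (k l : Cardinal)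
    (hk : ℵ₀ ≤ k) (hl : ℵ₀ ≤ l) (hlk : l ^ k = l)
    (a : k.ord.ToType → Rm) (ha : Function.Injective a)
    (hunb : ¬ ∃ b : Rp, ∀ α, R (a α) b)
    -- every challenge is met by some response
    (htot : ∀ r : Rm, ∃ b : Rp, R r b) :
    ∃ F : Set (l.ord.ToType → Rm), #F = 2 ^ l ∧
      (∀ A' ⊆ F, #A' = k →
        ¬ ∃ g : l.ord.ToType → Rp, ∀ f ∈ A', ∀ x, R (f x) (g x)) ∧
      -- in particular, the dominating number of the λ-fold conjunction is `2 ^ l`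
      (#(l.ord.ToType → Rp) ≤ 2 ^ l →
        sInf {c | ∃ D : Set (l.ord.ToType → Rp), #D = c ∧
          ∀ f : l.ord.ToType → Rm, ∃ g ∈ D, ∀ x, R (f x) (g x)} = 2 ^ l) := by
  haveI hKinf : Infinite k.ord.ToType := by
    rw [Cardinal.infinite_iff, mk_ord_toType]; exact hk
  obtain ⟨α₀, α₁, hneK⟩ := exists_pair_ne k.ord.ToType
  -- basic cardinal facts
  have h2l : (2 : Cardinal) ≤ l := ((nat_lt_aleph0 2).le.trans hl)
  have hkl : k < l := by
    calc k < 2 ^ k := cantor k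
    _ ≤ l ^ k := power_le_power_right h2l
    _ = l := hlk
  have hk2l : k < 2 ^ l := hkl.trans (cantor l)
  -- the index type for the independent family
  have h1 : #(Option l.ord.ToType) = l := by
    rw [mk_option, mk_ord_toType, add_one_eq hl]
  have h2 : #(k.ord.ToType → Option l.ord.ToType) = l := by
    rw [← power_def, h1, mk_ord_toType, hlk]
  have h3 : #((k.ord.ToType → Option l.ord.ToType) ×
      (k.ord.ToType → Option l.ord.ToType)) = l := by
    simp only [mk_prod, lift_id, h2]
    exact mul_eq_self hl
  have hX : #(k.ord.ToType → (k.ord.ToType → Option l.ord.ToType) ×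
      (k.ord.ToType → Option l.ord.ToType)) = l := by
    rw [← power_def, h3, mk_ord_toType, hlk]
  have hXe : Nonempty (l.ord.ToType ≃ (k.ord.ToType →
      (k.ord.ToType → Option l.ord.ToType) × (k.ord.ToType → Option l.ord.ToType))) := by
    apply Cardinal.eq.mp
    rw [mk_ord_toType, hX]
  obtain ⟨e⟩ := hXe
  set Ff : Set l.ord.ToType → (l.ord.ToType → Rm) :=
    fun A => EKfun a A ∘ e with hFf
  have hFfinj : Function.Injective Ff := by
    intro A A' h
    apply EKinj a ha α₀ α₁ hneK
    funext s
    have := congrFun h (e.symm s)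
    simpa [hFf] using this
  refine ⟨Set.range Ff, ?_, ?_, ?_⟩
  · rw [mk_range_eq Ff hFfinj, mk_set, mk_ord_toType]
  · -- the unbounded-subfamily property
    intro A' hsub hcard ⟨g, hg⟩
    have : Nonempty (k.ord.ToType ≃ A') := by
      apply Cardinal.eq.mp
      rw [mk_ord_toType, hcard]
    obtain ⟨j⟩ := this
    have hBex : ∀ α, ∃ A, Ff A = (j α : l.ord.ToType → Rm) := fun α => hsub (j α).2
    choose B hB using hBex
    have hBinj : Function.Injective B := by
      intro α β h
      apply j.injective
      apply Subtype.ext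
      rw [← hB, ← hB, h]
    obtain ⟨s, hskey⟩ := EKkey a B hBinj
    apply hunb
    refine ⟨g (e.symm s), fun α => ?_⟩
    have h1 := hg (j α) (j α).2 (e.symm s)
    have heq : (j α : l.ord.ToType → Rm) (e.symm s) = a α := by
      rw [← hB α]
      show EKfun a (B α) (e (e.symm s)) = a α
      rw [e.apply_symm_apply]
      exact hskey α
    rwa [heq] at h1
  · -- the dominating-number computation
    intro hRp
    have hmem : #(Set.univ : Set (l.ord.ToType → Rp)) ∈
        {c | ∃ D : Set (l.ord.ToType → Rp), #D = c ∧
          ∀ f : l.ord.ToType → Rm, ∃ g ∈ D, ∀ x, R (f x) (g x)} := by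
      refine ⟨Set.univ, rfl, fun f => ⟨fun x => (htot (f x)).choose, Set.mem_univ _,
        fun x => (htot (f x)).choose_spec⟩⟩
    apply le_antisymm
    · exact le_trans (csInf_le' hmem) (by rw [Cardinal.mk_univ]; exact hRp)
    · apply le_csInf ⟨_, hmem⟩
      rintro c ⟨D, hD, hdom⟩
      by_contra hlt
      push_neg at hlt
      have hDlt : #D < 2 ^ l := hD ▸ hlt
      -- choose dominators for members of the range family
      have hchoice : ∀ f : Set.range Ff, ∃ g, g ∈ D ∧ ∀ x, R (f.val x) (g x) := by
        intro f
        obtain ⟨g, hg1, hg2⟩ := hdom f.val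
        exact ⟨g, hg1, hg2⟩
      choose φ hφmem hφdom using hchoice
      set φ' : Set.range Ff → D := fun f => ⟨φ f, hφmem f⟩ with hφ'
      by_cases hfib : ∃ g : D, k ≤ #(φ' ⁻¹' {g})
      · obtain ⟨g, hg⟩ := hfib
        obtain ⟨p, hpsub, hpcard⟩ := le_mk_iff_exists_subset.mp hg
        have hcontra : ∃ gg : l.ord.ToType → Rp,
            ∀ f ∈ Subtype.val '' p, ∀ x, R (f x) (gg x) := by
          refine ⟨g.val, ?_⟩
          rintro f ⟨fF, hfFp, rfl⟩ x
          have hgf : φ' fF = g := hpsub hfFp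
          have : φ fF = g.val := congrArg Subtype.val hgf
          rw [← this]
          exact hφdom fF x
        -- this violates the subfamily property proved above
        obtain ⟨gg, hgg⟩ := hcontra
        apply hunb
        -- redo the argument : image set is a k-sized subfamily of the range
        have hsub' : Subtype.val '' p ⊆ Set.range Ff := by
          rintro f ⟨fF, _, rfl⟩; exact fF.2
        have hcard' : #(Subtype.val '' p) = k := by
          rw [Cardinal.mk_image_eq Subtype.val_injective, hpcard]
        have : Nonempty (k.ord.ToType ≃ (Subtype.val '' p : Set (l.ord.ToType → Rm))) := by
          apply Cardinal.eq.mp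
          rw [mk_ord_toType, hcard']
        obtain ⟨j⟩ := this
        have hBex : ∀ α, ∃ A, Ff A = (j α : l.ord.ToType → Rm) := fun α => hsub' (j α).2
        choose B hB using hBex
        have hBinj : Function.Injective B := by
          intro α β h
          apply j.injective
          apply Subtype.ext
          rw [← hB, ← hB, h]
        obtain ⟨s, hskey⟩ := EKkey a B hBinj
        refine ⟨gg (e.symm s), fun α => ?_⟩
        have h1 := hgg (j α) (j α).2 (e.symm s)
        have heq : (j α : l.ord.ToType → Rm) (e.symm s) = a α := by
          rw [← hB α]
          show EKfun a (B α) (e (e.symm s)) = a α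
          rw [e.apply_symm_apply]
          exact hskey α
        rwa [heq] at h1
      · push_neg at hfib
        have hbound : #(Set.range Ff) ≤ #D * k :=
          mk_le_mk_mul_of_mk_preimage_le φ' (fun g => (hfib g).le)
        have hF2 : #(Set.range Ff) = 2 ^ l := by
          rw [mk_range_eq Ff hFfinj, mk_set, mk_ord_toType]
        have h2F : (2 : Cardinal) ^ l ≤ #D * k := hF2 ▸ hbound
        have : #D * k < 2 ^ l :=
          Cardinal.mul_lt_of_lt (hl.trans (cantor l).le) hDlt hk2l
        exact absurd h2F (not_le.mpr this)
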